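/- Let ℓ > 0 and let k : ℝ → ℝ be a continuous, ℓ-periodic, everywhere positive function with ∫₀^ℓ k(s) ds = 2π (the curvature of a smooth closed strictly convex curve of length ℓ). Set L := ∫₀^ℓ k(s)^{2/3} ds. Then L³ ≤ 4π²ℓ, i.e. (1/4)L³ − π²ℓ ≤ 0, with equality if and only if k is constant (equal to 2π/ℓ), i.e. if and only if the curve is a circle. Equivalently, with β₁ = ℓ and β₃ = L³/12 the first two odd Taylor coefficients of Mather's β-function of the outer length billiard, 3β₃ − π²β₁ ≤ 0 with equality exactly for circles. -/

import Mathlib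

noncomputable section

open MeasureTheory

/-- cube root uniqueness on positives -/
lemma cube_eq_cube_aux {a b : ℝ} (ha : 0 < a) (hb : 0 < b) (h : a ^ 3 = b ^ 3) : a = b := by
  have h5 : (a - b) * (a ^ 2 + a * b + b ^ 2) = 0 := by linear_combination h
  have h6 : 0 < a ^ 2 + a * b + b ^ 2 := by positivity
  have := mul_eq_zero.mp h5
  rcases this with h7 | h7
  · linarith
  · linarith

/-- AM-GM key pointwise inequality with equality case. -/
lemma amgm_key_aux (c x : ℝ) (hc : 0 < c) (hx : 0 < x) :
    0 ≤ c + 2 * x - 3 * c ^ ((1:ℝ)/3) * x ^ ((2:ℝ)/3) ∧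
    (c + 2 * x - 3 * c ^ ((1:ℝ)/3) * x ^ ((2:ℝ)/3) = 0 ↔ x = c) := by
  set a := c ^ ((1:ℝ)/3) with ha
  set b := x ^ ((1:ℝ)/3) with hb
  have hA : 0 < a := Real.rpow_pos_of_pos hc _
  have hB : 0 < b := Real.rpow_pos_of_pos hx _
  have hac : a ^ 3 = c := by
    rw [ha, ← Real.rpow_natCast (c ^ ((1:ℝ)/3)) 3, ← Real.rpow_mul hc.le]; norm_num
  have hbx : b ^ 3 = x := by
    rw [hb, ← Real.rpow_natCast (x ^ ((1:ℝ)/3)) 3, ← Real.rpow_mul hx.le]; norm_num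
  have hb2 : b ^ 2 = x ^ ((2:ℝ)/3) := by
    rw [hb, ← Real.rpow_natCast (x ^ ((1:ℝ)/3)) 2, ← Real.rpow_mul hx.le]; norm_num
  rw [← hb2, ← hac, ← hbx]
  constructor
  · nlinarith [mul_nonneg (sq_nonneg (a - b)) (by positivity : (0:ℝ) ≤ a + 2 * b)]
  · constructor
    · intro h
      have h2 : (a - b) ^ 2 * (a + 2 * b) = 0 := by linear_combination h
      have h3 : a + 2 * b > 0 := by positivity
      have h5 : (a - b) ^ 2 = 0 := by
        rcases mul_eq_zero.mp h2 with h7 | h7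
        · exact h7
        · exact absurd h7 (by positivity)
      have h4 : a = b := by nlinarith [h5]
      rw [h4]
    · intro h
      have h4 : b = a := cube_eq_cube_aux hB hA h
      rw [h4]; ring

theorem beta_coefficients_recognize_circle
    (ℓ : ℝ) (hℓ : 0 < ℓ) (k : ℝ → ℝ) (hk : Continuous k)
    (hper : ∀ s, k (s + ℓ) = k s) (hpos : ∀ s, 0 < k s)
    (htot : (∫ s in (0:ℝ)..ℓ, k s) = 2 * Real.pi)
    (L : ℝ) (hL : L = ∫ s in (0:ℝ)..ℓ, (k s) ^ ((2:ℝ)/3)) :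
    (1/4) * L ^ 3 - Real.pi ^ 2 * ℓ ≤ 0 ∧
    ((1/4) * L ^ 3 - Real.pi ^ 2 * ℓ = 0 ↔ ∀ s, k s = 2 * Real.pi / ℓ) := by
  have hπ : 0 < Real.pi := Real.pi_pos
  set c : ℝ := 2 * Real.pi / ℓ with hcdef
  have hc : 0 < c := by positivity
  set f : ℝ → ℝ := fun s => c + 2 * k s - 3 * c ^ ((1:ℝ)/3) * (k s) ^ ((2:ℝ)/3) with hfdef
  have hgcont : Continuous fun s => (k s) ^ ((2:ℝ)/3) :=
    hk.rpow_const (fun s => Or.inl (hpos s).ne')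
  have hfcont : Continuous f := by
    apply Continuous.sub
    · exact continuous_const.add (continuous_const.mul hk)
    · exact continuous_const.mul hgcont
  have hfnonneg : ∀ s, 0 ≤ f s := fun s => (amgm_key_aux c (k s) hc (hpos s)).1
  have hfzero : ∀ s, f s = 0 ↔ k s = c := fun s => (amgm_key_aux c (k s) hc (hpos s)).2
  -- compute the integral of f
  have hintf : (∫ s in (0:ℝ)..ℓ, f s) = 6 * Real.pi - 3 * c ^ ((1:ℝ)/3) * L := by
    have h1 : IntervalIntegrable (fun s => c + 2 * k s) volume 0 ℓ :=
      (continuous_const.add (continuous_const.mul hk)).intervalIntegrable _ _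
    have h2 : IntervalIntegrable (fun s => 3 * c ^ ((1:ℝ)/3) * (k s) ^ ((2:ℝ)/3)) volume 0 ℓ :=
      (continuous_const.mul hgcont).intervalIntegrable _ _
    rw [hfdef]
    rw [intervalIntegral.integral_sub h1 h2,
      intervalIntegral.integral_add (intervalIntegrable_const)
        ((continuous_const.mul hk).intervalIntegrable _ _) (f := fun _ => c) (g := fun s => 2 * k s),
      intervalIntegral.integral_const_mul, intervalIntegral.integral_const_mul,
      intervalIntegral.integral_const, htot, ← hL]
    have : (ℓ - 0) • c = 2 * Real.pi := by
      rw [hcdef, smul_eq_mul, sub_zero]; field_simp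
    rw [this]; ring
  -- nonnegativity of the integral
  have hint_nonneg : 0 ≤ ∫ s in (0:ℝ)..ℓ, f s :=
    intervalIntegral.integral_nonneg hℓ.le (fun s _ => hfnonneg s)
  have hkey : 3 * c ^ ((1:ℝ)/3) * L ≤ 6 * Real.pi := by linarith [hint_nonneg, hintf.symm.le, hintf.le]
  have hc13 : 0 < c ^ ((1:ℝ)/3) := Real.rpow_pos_of_pos hc _
  have hc13cube : (c ^ ((1:ℝ)/3)) ^ 3 = c := by
    rw [← Real.rpow_natCast (c ^ ((1:ℝ)/3)) 3, ← Real.rpow_mul hc.le]; norm_num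
  have hLpos : 0 < L := by
    rw [hL]
    exact intervalIntegral.intervalIntegral_pos_of_pos
      (hgcont.intervalIntegrable _ _) (fun s => Real.rpow_pos_of_pos (hpos s) _) hℓ
  have hcL : c ^ ((1:ℝ)/3) * L ≤ 2 * Real.pi := by linarith
  have hcube : c * L ^ 3 ≤ 8 * Real.pi ^ 3 := by
    have h := pow_le_pow_left₀ (by positivity) hcL 3
    calc c * L ^ 3 = (c ^ ((1:ℝ)/3) * L) ^ 3 := by rw [mul_pow, hc13cube]
      _ ≤ (2 * Real.pi) ^ 3 := h
      _ = 8 * Real.pi ^ 3 := by ring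
  have hmain : (1/4) * L ^ 3 - Real.pi ^ 2 * ℓ ≤ 0 := by
    rw [hcdef] at hcube
    have h2 : 2 * Real.pi * L ^ 3 ≤ 8 * Real.pi ^ 3 * ℓ := by
      have := mul_le_mul_of_nonneg_left hcube hℓ.le
      calc 2 * Real.pi * L ^ 3 = ℓ * (2 * Real.pi / ℓ * L ^ 3) := by field_simp
        _ ≤ ℓ * (8 * Real.pi ^ 3) := this
        _ = 8 * Real.pi ^ 3 * ℓ := by ring
    nlinarith
  refine ⟨hmain, ?_, ?_⟩
  · -- equality implies k constant
    intro heq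
    -- equality forces ∫ f = 0
    have hL3 : L ^ 3 = 4 * Real.pi ^ 2 * ℓ := by linarith
    have hcL3 : c * L ^ 3 = 8 * Real.pi ^ 3 := by
      rw [hL3, hcdef]; field_simp; ring
    have hcLeq : c ^ ((1:ℝ)/3) * L = 2 * Real.pi := by
      have h3 : (c ^ ((1:ℝ)/3) * L) ^ 3 = (2 * Real.pi) ^ 3 := by
        rw [mul_pow, hc13cube]; rw [hcL3]; ring
      exact cube_eq_cube_aux (mul_pos hc13 hLpos) (by positivity) h3
    have hintzero : (∫ s in (0:ℝ)..ℓ, f s) = 0 := by rw [hintf]; linarith [hcLeq]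
    -- show k s = c for all s
    by_contra hcon
    push_neg at hcon
    obtain ⟨s₀, hs₀⟩ := hcon
    have hfs₀ : 0 < f s₀ := lt_of_le_of_ne (hfnonneg s₀) (fun h => hs₀ ((hfzero s₀).mp h.symm))
    -- f is periodic
    have hfper : Function.Periodic f ℓ := by
      intro s; simp only [hfdef, hper]
    have hshift : (∫ s in (s₀ - ℓ/2)..(s₀ - ℓ/2 + ℓ), f s) = ∫ s in (0:ℝ)..ℓ, f s := by
      have := hfper.intervalIntegral_add_eq (s₀ - ℓ/2) 0
      simpa using this
    have hintpos : 0 < ∫ s in (s₀ - ℓ/2)..(s₀ - ℓ/2 + ℓ), f s := by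
      rw [intervalIntegral.integral_pos_iff_support_of_nonneg_ae
        (Filter.Eventually.of_forall hfnonneg) (hfcont.intervalIntegrable _ _)]
      refine ⟨by linarith, ?_⟩
      have hU : IsOpen ({x | 0 < f x} ∩ Set.Ioo (s₀ - ℓ/2) (s₀ - ℓ/2 + ℓ)) :=
        (isOpen_lt continuous_const hfcont).inter isOpen_Ioo
      have hmem : s₀ ∈ {x | 0 < f x} ∩ Set.Ioo (s₀ - ℓ/2) (s₀ - ℓ/2 + ℓ) := by
        refine ⟨hfs₀, by constructor <;> linarith⟩
      have hvol : 0 < volume ({x | 0 < f x} ∩ Set.Ioo (s₀ - ℓ/2) (s₀ - ℓ/2 + ℓ)) :=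
        hU.measure_pos volume ⟨s₀, hmem⟩
      refine lt_of_lt_of_le hvol (measure_mono ?_)
      rintro x ⟨hx1, hx2⟩
      exact ⟨ne_of_gt hx1, Set.Ioo_subset_Ioc_self hx2⟩
    rw [hshift, hintzero] at hintpos
    exact lt_irrefl 0 hintpos
  · -- k constant implies equality
    intro hconst
    have hLval : L = ℓ * c ^ ((2:ℝ)/3) := by
      rw [hL]
      have : (fun s => (k s) ^ ((2:ℝ)/3)) = fun _ => c ^ ((2:ℝ)/3) := by
        funext s; rw [hconst s]
      rw [this, intervalIntegral.integral_const, smul_eq_mul]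
      ring
    have hc23 : (c ^ ((2:ℝ)/3)) ^ 3 = c ^ 2 := by
      rw [← Real.rpow_natCast (c ^ ((2:ℝ)/3)) 3, ← Real.rpow_mul hc.le]
      norm_num
    have : L ^ 3 = ℓ ^ 3 * c ^ 2 := by rw [hLval, mul_pow, hc23]
    rw [this, hcdef]
    field_simp
    try ring
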